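/- (Policy gradient theorem, episodic finite-horizon case with terminal rewards) For a finite-horizon autoregressive policy π_θ over sequences of length T with zero intermediate rewards and deterministic transitions, the gradient of the expected terminal reward J(θ) = Σ_{s_1} π_θ(s_1|s_0) Q(s_0, s_1) satisfies ∇_θ J(θ) = Σ_{t=1}^{T} Σ_{S_{1:t-1}} Pr(S_{1:t-1} | s_0; π_θ) Σ_{s_t} ∇_θ π_θ(s_t | S_{1:t-1}) Q(S_{1:t-1}, s_t), provided that Q at terminal sequences (length T) does not depend on θ. -/

import Mathlib

/-- Value of a prefix `S` with `n` steps remaining until the horizon: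
zero intermediate rewards, terminal reward `D`, autoregressive policy `π`. -/
def storyVal {E : Type*} [Fintype E] (π : List E → E → ℝ) (D : List E → ℝ) :
    ℕ → List E → ℝ
  | 0, S => D S
  | n + 1, S => ∑ s, π S s * storyVal π D n (S ++ [s])

set_option maxHeartbeats 1000000 in
lemma storyVal_diff {E : Type*} [Fintype E] {d : ℕ}
    (π : (Fin d → ℝ) → List E → E → ℝ) (D : List E → ℝ) (θ₀ : Fin d → ℝ)
    (hdiff : ∀ S s, DifferentiableAt ℝ (fun θ => π θ S s) θ₀) :
    ∀ n S, DifferentiableAt ℝ (fun θ => storyVal (π θ) D n S) θ₀ := by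
  intro n
  induction n with
  | zero => intro S; simp [storyVal]
  | succ n ih =>
      intro S
      simp only [storyVal]
      exact DifferentiableAt.fun_sum fun s _ => (hdiff S s).mul (ih (S ++ [s]))

lemma storyVal_fderiv {E : Type*} [Fintype E] {d : ℕ}
    (π : (Fin d → ℝ) → List E → E → ℝ) (D : List E → ℝ) (θ₀ : Fin d → ℝ)
    (hdiff : ∀ S s, DifferentiableAt ℝ (fun θ => π θ S s) θ₀) :
    ∀ n S, fderiv ℝ (fun θ => storyVal (π θ) D n S) θ₀
      = ∑ t ∈ Finset.range n, ∑ f : Fin t → E,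
          (∏ i : Fin t, π θ₀ (S ++ (List.ofFn f).take i.1) (f i)) •
            ∑ s : E, (storyVal (π θ₀) D (n - (t + 1)) (S ++ List.ofFn f ++ [s])) •
              fderiv ℝ (fun θ => π θ (S ++ List.ofFn f) s) θ₀ := by
  intro n
  induction n with
  | zero =>
      intro S
      simp [storyVal, fderiv_const]
  | succ n ih =>
      intro S
      have hmul : ∀ s : E, DifferentiableAt ℝ
          (fun θ => π θ S s * storyVal (π θ) D n (S ++ [s])) θ₀ :=
        fun s => (hdiff S s).mul (storyVal_diff π D θ₀ hdiff n (S ++ [s]))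
      have h1 : fderiv ℝ (fun θ => storyVal (π θ) D (n + 1) S) θ₀
          = ∑ s : E, (π θ₀ S s • fderiv ℝ (fun θ => storyVal (π θ) D n (S ++ [s])) θ₀
            + storyVal (π θ₀) D n (S ++ [s]) • fderiv ℝ (fun θ => π θ S s) θ₀) := by
        simp only [storyVal]
        rw [fderiv_fun_sum (fun s _ => hmul s)]
        refine Finset.sum_congr rfl fun s _ => ?_
        rw [fderiv_fun_mul (hdiff S s) (storyVal_diff π D θ₀ hdiff n (S ++ [s]))]
      rw [h1, Finset.sum_add_distrib, Finset.sum_range_succ']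
      congr 1
      · -- terms for t ≥ 1
        simp only [ih, Finset.smul_sum]
        rw [Finset.sum_comm]
        refine Finset.sum_congr rfl fun k _ => ?_
        rw [← Equiv.sum_comp (Fin.consEquiv fun _ : Fin (k + 1) => E),
          Fintype.sum_prod_type]
        refine Finset.sum_congr rfl fun s _ => ?_
        refine Finset.sum_congr rfl fun f _ => ?_
        refine Finset.sum_congr rfl fun s' _ => ?_
        simp only [Fin.consEquiv_apply, List.ofFn_succ, Fin.cons_zero, Fin.cons_succ,
          Fin.prod_univ_succ, List.take_zero, List.append_nil, Fin.val_succ,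
          List.take_succ_cons, List.append_assoc, List.singleton_append,
          List.cons_append, Nat.succ_sub_succ, List.nil_append, Fin.val_zero]
        rw [mul_smul]
      · -- t = 0 term
        simp [Fin.prod_univ_zero, List.ofFn_zero, Nat.add_sub_cancel,
          Fintype.sum_unique]


/-- Policy gradient theorem, episodic finite-horizon case with
terminal rewards: with zero intermediate rewards, deterministic transitions,
and a θ-independent terminal reward `D`,
`∇_θ J(θ) = ∑_{t=1}^{T} ∑_{S_{1:t-1}} Pr(S_{1:t-1}|s₀;π_θ)
   ∑_{s_t} ∇_θ π_θ(s_t | S_{1:t-1}) · Q(S_{1:t-1}, s_t)`,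
where `Q(S_{1:t-1}, s_t) = v(S_{1:t})` is the value of the extended prefix. -/
theorem policy_gradient_theorem {E : Type*} [Fintype E] {d : ℕ} (T : ℕ)
    (π : (Fin d → ℝ) → List E → E → ℝ) (D : List E → ℝ) (θ₀ : Fin d → ℝ)
    (hprob : ∀ θ S, (∀ s, 0 ≤ π θ S s) ∧ ∑ s, π θ S s = 1)
    (hdiff : ∀ S s, DifferentiableAt ℝ (fun θ => π θ S s) θ₀) :
    fderiv ℝ (fun θ => storyVal (π θ) D T []) θ₀
      = ∑ t ∈ Finset.range T, ∑ f : Fin t → E,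
          (∏ i : Fin t, π θ₀ ((List.ofFn f).take i.1) (f i)) •
            ∑ s : E, (storyVal (π θ₀) D (T - (t + 1)) (List.ofFn f ++ [s])) •
              fderiv ℝ (fun θ => π θ (List.ofFn f) s) θ₀ := by
  simpa using storyVal_fderiv π D θ₀ hdiff T []
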